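/- Let s : ℝ → ℝ be concave, nondecreasing, and positive on [1,∞). Suppose a total amount of work x₁ + x₂ is processed in two phases: work x₁ > 0 at rate s(k₁) taking time t₁ = x₁/s(k₁), and work x₂ > 0 at rate s(k₂) taking time t₂ = x₂/s(k₂), with k₁, k₂ ≥ 1. Define the time-averaged allocation k = k₁·t₁/(t₁+t₂) + k₂·t₂/(t₁+t₂). Then (x₁ + x₂)/s(k) ≤ t₁ + t₂, i.e., processing all the work at the constant allocation k completes at least as fast. -/

import Mathlib

/-- Averaging two allocation levels with a concave, nondecreasing, positive
speedup function: processing all the work at the time-averaged constant allocation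
completes at least as fast. -/
theorem stmt_1 (s : ℝ → ℝ)
    (hconc : ConcaveOn ℝ (Set.Ici (1 : ℝ)) s)
    (hmono : ∀ k₁ k₂, 1 ≤ k₁ → k₁ ≤ k₂ → s k₁ ≤ s k₂)
    (hpos : ∀ k, 1 ≤ k → 0 < s k)
    (x₁ x₂ k₁ k₂ t₁ t₂ k : ℝ)
    (hx₁ : 0 < x₁) (hx₂ : 0 < x₂) (hk₁ : 1 ≤ k₁) (hk₂ : 1 ≤ k₂)
    (ht₁ : t₁ = x₁ / s k₁) (ht₂ : t₂ = x₂ / s k₂)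
    (hk : k = k₁ * (t₁ / (t₁ + t₂)) + k₂ * (t₂ / (t₁ + t₂))) :
    (x₁ + x₂) / s k ≤ t₁ + t₂ := by
  have hs₁ := hpos k₁ hk₁
  have hs₂ := hpos k₂ hk₂
  have ht₁p : 0 < t₁ := ht₁ ▸ div_pos hx₁ hs₁
  have ht₂p : 0 < t₂ := ht₂ ▸ div_pos hx₂ hs₂
  have hT : 0 < t₁ + t₂ := by linarith
  set a := t₁ / (t₁ + t₂) with ha
  set b := t₂ / (t₁ + t₂) with hb
  have hap : 0 < a := div_pos ht₁p hT
  have hbp : 0 < b := div_pos ht₂p hT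
  have hab : a + b = 1 := by
    rw [ha, hb, ← add_div, div_self hT.ne']
  have hkeq : k = a * k₁ + b * k₂ := by rw [hk]; ring
  have hk1 : 1 ≤ k := by
    rw [hkeq]
    nlinarith
  have hconc' := hconc.2 (Set.mem_Ici.mpr hk₁) (Set.mem_Ici.mpr hk₂)
    hap.le hbp.le hab
  rw [smul_eq_mul, smul_eq_mul, smul_eq_mul, smul_eq_mul, ← hkeq] at hconc'
  have hval : a * s k₁ + b * s k₂ = (x₁ + x₂) / (t₁ + t₂) := by
    have h1 : t₁ * s k₁ = x₁ := by
      rw [ht₁]; field_simp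
    have h2 : t₂ * s k₂ = x₂ := by
      rw [ht₂]; field_simp
    rw [ha, hb]
    field_simp
    nlinarith
  rw [hval] at hconc'
  have hsk : 0 < s k := hpos k hk1
  rw [div_le_iff₀ hsk]
  rw [div_le_iff₀ hT] at hconc'
  nlinarith
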